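/- For every n ≥ 1 and every j < 2^n, the bitwise complement of the dominated set, D̄_j = {(2^n − 1) − k : k ∈ D_j} where D_j = {k < 2^n : k ⪯ j}, is a minimal puncturing bit pattern making encoder input bit j incapable: j ∈ U_p(D̄_j), and for every proper subset Q ⊊ D̄_j one has j ∉ U_p(Q). -/
import Mathlib


/-- Binary domination: every binary digit of `i` is at most the corresponding digit of `j`. -/
def bdom (i j : ℕ) : Prop := ∀ t, i.testBit t = true → j.testBit t = true

instance (i j : ℕ) : Decidable (bdom i j) :=
  decidable_of_iff (i ||| j = j) (by
    constructor
    · intro h t hi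
      have h1 : (i ||| j).testBit t = j.testBit t := by rw [h]
      rw [Nat.testBit_or, hi, Bool.true_or] at h1
      exact h1.symm
    · intro h
      apply Nat.eq_of_testBit_eq
      intro t
      rw [Nat.testBit_or]
      cases hi : i.testBit t with
      | true => simp [h t hi]
      | false => simp)

/-- One step of zero-LLR propagation, computing the stage-`t` zero-LLR set from the
stage-`t+1` zero-LLR set `S`, for a polar code of length `2^n`. -/
def zstep (n t : ℕ) (S : Finset ℕ) : Finset ℕ :=
  (Finset.range (2 ^ n)).filter fun i =>
    if i.testBit t then i ∈ S ∧ i - 2 ^ t ∈ S else i ∈ S ∨ i + 2 ^ t ∈ S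

/-- Zero-LLR set at stage `t` for puncturing set `X`, for a polar code of length `2^n`:
`Zstage n X n = X` and `Zstage n X t = zstep n t (Zstage n X (t+1))` for `t < n`. -/
def Zstage (n : ℕ) (X : Finset ℕ) (t : ℕ) : Finset ℕ :=
  if _h : n ≤ t then X else zstep n t (Zstage n X (t + 1))
termination_by n - t
decreasing_by omega

/-- The incapable set resulting from puncturing set `X`. -/
def Up (n : ℕ) (X : Finset ℕ) : Finset ℕ := Zstage n X 0

-- helpers
lemma compl_testBit {n k : ℕ} (hk : k < 2^n) (t : ℕ) :
    (2^n - 1 - k).testBit t = (decide (t < n) && !(k.testBit t)) := by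
  have h : 2^n - 1 - k = 2^n - (k+1) := by omega
  rw [h, Nat.testBit_two_pow_sub_succ hk]

lemma testBit_add_high {r t n : ℕ} (h : t < n) : (r + 2^n).testBit t = r.testBit t := by
  rw [Nat.add_comm, Nat.testBit_two_pow_add_gt h]

lemma testBit_add_self {r n : ℕ} (hr : r < 2^n) : (r + 2^n).testBit n = true := by
  rw [Nat.add_comm, Nat.testBit_two_pow_add_eq, Nat.testBit_lt_two_pow hr]
  rfl

lemma add_pow_lt {i t n : ℕ} (hi : i < 2^n) (ht : t < n) (hb : i.testBit t = false) :
    i + 2^t < 2^n := by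
  have hr : i % 2^(t+1) < 2^t := by
    by_contra hge
    push_neg at hge
    have h1 : i % 2^(t+1) < 2^(t+1) := Nat.mod_lt _ (Nat.two_pow_pos _)
    have hp : (2:ℕ)^(t+1) = 2^t * 2 := by rw [pow_succ]
    have hd : (i % 2^(t+1)) / 2^t = 1 := by
      rw [Nat.div_eq_sub_div (Nat.two_pow_pos t) hge, Nat.div_eq_of_lt (by omega)]
    have ht' : (i % 2^(t+1)).testBit t = true := by
      rw [Nat.testBit_eq_decide_div_mod_eq, hd]
      rfl
    rw [Nat.testBit_mod_two_pow, hb] at ht'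
    simp at ht'
  have hq : i / 2^(t+1) + 1 ≤ 2^(n-t-1) := by
    have : i < 2^(n-t-1) * 2^(t+1) := by
      rw [← pow_add]
      have : n - t - 1 + (t+1) = n := by omega
      rw [this]; exact hi
    have := (Nat.div_lt_iff_lt_mul (Nat.two_pow_pos (t+1))).2 this
    omega
  have hdiv : i % 2^(t+1) + 2^(t+1) * (i / 2^(t+1)) = i := Nat.mod_add_div i _
  have hkey : 2^(t+1) * (i / 2^(t+1) + 1) ≤ 2^(t+1) * 2^(n-t-1) :=
    Nat.mul_le_mul_left _ hq
  have hpow : 2^(t+1) * 2^(n-t-1) = 2^n := by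
    rw [← pow_add]; congr 1; omega
  have hp : (2:ℕ)^(t+1) = 2^t * 2 := by rw [pow_succ]
  have e1 : 2^(t+1)*(i/2^(t+1)) + 2^(t+1) = 2^(t+1)*(i/2^(t+1)+1) := by ring
  omega

lemma lt_pow_of_testBit_false {j n : ℕ} (hj : j < 2^(n+1)) (hb : j.testBit n = false) :
    j < 2^n := by
  by_contra hge
  push_neg at hge
  have hp : (2:ℕ)^(n+1) = 2^n * 2 := by rw [pow_succ]
  have hd : j / 2^n = 1 := by
    rw [Nat.div_eq_sub_div (Nat.two_pow_pos n) hge, Nat.div_eq_of_lt (by omega)]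
  have : j.testBit n = true := by
    rw [Nat.testBit_eq_decide_div_mod_eq, hd]; rfl
  rw [hb] at this; exact Bool.false_ne_true this

lemma mem_zstep {n t i : ℕ} {S : Finset ℕ} :
    i ∈ zstep n t S ↔ i < 2^n ∧
      (if i.testBit t then i ∈ S ∧ i - 2^t ∈ S else i ∈ S ∨ i + 2^t ∈ S) := by
  simp [zstep]

lemma Zstage_stop {n t : ℕ} (h : n ≤ t) (X : Finset ℕ) : Zstage n X t = X := by
  rw [Zstage]; simp [h]

lemma Zstage_step {n t : ℕ} (h : t < n) (X : Finset ℕ) :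
    Zstage n X t = zstep n t (Zstage n X (t + 1)) := by
  rw [Zstage]; simp [Nat.not_le.2 h]

lemma zstep_mono {n t : ℕ} {S T : Finset ℕ} (h : S ⊆ T) : zstep n t S ⊆ zstep n t T := by
  intro i hi
  rw [mem_zstep] at hi ⊢
  refine ⟨hi.1, ?_⟩
  rcases hi with ⟨-, hi⟩
  split at hi <;> split
  · exact ⟨h hi.1, h hi.2⟩
  · simp_all
  · simp_all
  · rcases hi with hi | hi
    · exact Or.inl (h hi)
    · exact Or.inr (h hi)

lemma Zstage_mono {n : ℕ} {X Y : Finset ℕ} (h : X ⊆ Y) (t : ℕ) :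
    Zstage n X t ⊆ Zstage n Y t := by
  by_cases ht : n ≤ t
  · rw [Zstage_stop ht, Zstage_stop ht]; exact h
  · rw [Zstage_step (Nat.lt_of_not_le ht), Zstage_step (Nat.lt_of_not_le ht)]
    exact zstep_mono (Zstage_mono h (t+1))
termination_by n - t
decreasing_by omega

def Dbar (n j : ℕ) : Finset ℕ :=
  ((Finset.range (2 ^ n)).filter fun k => bdom k j).image fun k => 2 ^ n - 1 - k

lemma mem_Dbar {n j m : ℕ} :
    m ∈ Dbar n j ↔ m < 2^n ∧ ∀ t, t < n → j.testBit t = false → m.testBit t = true := by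
  constructor
  · intro hm
    simp only [Dbar, Finset.mem_image, Finset.mem_filter, Finset.mem_range] at hm
    obtain ⟨k, ⟨hk, hbd⟩, rfl⟩ := hm
    have h1 : 2^n - 1 - k < 2^n := by
      have := Nat.two_pow_pos n; omega
    refine ⟨h1, fun t ht hjt => ?_⟩
    rw [compl_testBit hk t]
    have hkt : k.testBit t = false := by
      cases hkt : k.testBit t with
      | false => rfl
      | true => rw [hbd t hkt] at hjt; exact absurd hjt (by simp)
    simp [ht, hkt]
  · rintro ⟨hm, hbit⟩
    simp only [Dbar, Finset.mem_image, Finset.mem_filter, Finset.mem_range]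
    refine ⟨2^n - 1 - m, ⟨?_, ?_⟩, ?_⟩
    · have := Nat.two_pow_pos n; omega
    · intro t hkt
      rw [compl_testBit hm t] at hkt
      have ht : t < n := by
        by_contra h; simp [h] at hkt
      have hmt : m.testBit t = false := by
        cases h : m.testBit t with
        | false => rfl
        | true => simp [ht, h] at hkt
      cases h : j.testBit t with
      | true => rfl
      | false => rw [hbit t ht h] at hmt; exact absurd hmt (by simp)
    · have := Nat.two_pow_pos n; omega

/-- the low half of `X` after the first mixing stage -/
def Slow (n : ℕ) (X : Finset ℕ) : Finset ℕ :=
  (Finset.range (2^n)).filter fun r => r ∈ X ∨ r + 2^n ∈ X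

/-- the high half of `X` after the first mixing stage -/
def Shigh (n : ℕ) (X : Finset ℕ) : Finset ℕ :=
  (Finset.range (2^n)).filter fun r => r ∈ X ∧ r + 2^n ∈ X

lemma halving (n : ℕ) (X : Finset ℕ) (t : ℕ) (ht : t ≤ n) (i : ℕ) (hi : i < 2^n) :
    (i ∈ Zstage (n+1) X t ↔ i ∈ Zstage n (Slow n X) t)
    ∧ ((i + 2^n) ∈ Zstage (n+1) X t ↔ i ∈ Zstage n (Shigh n X) t) := by
  have hi2 : i < 2^(n+1) := by
    have hp : (2:ℕ)^(n+1) = 2^n * 2 := by rw [pow_succ]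
    omega
  have hi2' : i + 2^n < 2^(n+1) := by
    have hp : (2:ℕ)^(n+1) = 2^n * 2 := by rw [pow_succ]
    omega
  rcases Nat.eq_or_lt_of_le ht with rfl | htn
  · -- base case t = n
    rw [Zstage_step (Nat.lt_succ_self t), Zstage_stop (le_refl t), Zstage_stop (le_refl t),
      Zstage_stop (by omega : (t:ℕ)+1 ≤ t+1)]
    constructor
    · rw [mem_zstep, Nat.testBit_lt_two_pow hi]
      simp only [Slow, Finset.mem_filter, Finset.mem_range, Bool.false_eq_true, reduceIte]
      tauto
    · rw [mem_zstep, testBit_add_self hi]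
      simp only [Shigh, Finset.mem_filter, Finset.mem_range, reduceIte, Nat.add_sub_cancel]
      tauto
  · -- inductive step t < n
    have IH : ∀ i' : ℕ, i' < 2^n →
        (i' ∈ Zstage (n+1) X (t+1) ↔ i' ∈ Zstage n (Slow n X) (t+1))
        ∧ ((i' + 2^n) ∈ Zstage (n+1) X (t+1) ↔ i' ∈ Zstage n (Shigh n X) (t+1)) :=
      fun i' hi' => halving n X (t+1) htn i' hi'
    rw [Zstage_step (by omega : t < n+1), Zstage_step htn, Zstage_step htn]
    have hbit : (i + 2^n).testBit t = i.testBit t := testBit_add_high (by omega)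
    constructor
    · rw [mem_zstep, mem_zstep]
      cases hb : i.testBit t with
      | false =>
        simp only [hb, Bool.false_eq_true, reduceIte]
        have h1 := (IH i hi).1
        have h2 := (IH (i + 2^t) (add_pow_lt hi htn hb)).1
        tauto
      | true =>
        simp only [hb, reduceIte]
        have h1 := (IH i hi).1
        have h2 := (IH (i - 2^t) (Nat.lt_of_le_of_lt (Nat.sub_le i (2^t)) hi)).1
        tauto
    · rw [mem_zstep, mem_zstep, hbit]
      cases hb : i.testBit t with
      | false =>
        simp only [hb, Bool.false_eq_true, reduceIte]
        have h1 := (IH i hi).2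
        have h2 := (IH (i + 2^t) (add_pow_lt hi htn hb)).2
        have he : i + 2^n + 2^t = i + 2^t + 2^n := by ring
        rw [he]
        tauto
      | true =>
        simp only [hb, reduceIte]
        have hge : 2^t ≤ i := Nat.ge_two_pow_of_testBit hb
        have h1 := (IH i hi).2
        have h2 := (IH (i - 2^t) (Nat.lt_of_le_of_lt (Nat.sub_le i (2^t)) hi)).2
        have he : i + 2^n - 2^t = i - 2^t + 2^n := by omega
        rw [he]
        tauto
termination_by n - t
decreasing_by omega

lemma Up_low {n : ℕ} {X : Finset ℕ} {i : ℕ} (hi : i < 2^n) :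
    i ∈ Up (n+1) X ↔ i ∈ Up n (Slow n X) :=
  (halving n X 0 (Nat.zero_le n) i hi).1

lemma Up_high {n : ℕ} {X : Finset ℕ} {i : ℕ} (hi : i < 2^n) :
    i + 2^n ∈ Up (n+1) X ↔ i ∈ Up n (Shigh n X) :=
  (halving n X 0 (Nat.zero_le n) i hi).2

lemma Dbar_low {n j r : ℕ} (hr : r < 2^n) :
    r ∈ Dbar (n+1) j ↔ (j.testBit n = true ∧ r ∈ Dbar n (j % 2^n)) := by
  have hp : (2:ℕ)^(n+1) = 2^n*2 := by rw [pow_succ]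
  rw [mem_Dbar, mem_Dbar]
  constructor
  · rintro ⟨hm, h⟩
    have hbn : j.testBit n = true := by
      cases hbn : j.testBit n with
      | true => rfl
      | false =>
        have := h n (Nat.lt_succ_self n) hbn
        rw [Nat.testBit_lt_two_pow hr] at this
        exact absurd this (by simp)
    refine ⟨hbn, hr, fun t ht hjt => ?_⟩
    rw [Nat.testBit_mod_two_pow, decide_eq_true ht, Bool.true_and] at hjt
    exact h t (by omega) hjt
  · rintro ⟨hbn, hr', h⟩
    refine ⟨by omega, fun t ht hjt => ?_⟩
    rcases Nat.lt_or_ge t n with htn | htn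
    · exact h t htn (by rw [Nat.testBit_mod_two_pow, decide_eq_true htn, Bool.true_and]; exact hjt)
    · have : t = n := by omega
      subst this
      rw [hbn] at hjt; exact absurd hjt (by simp)

lemma Dbar_high {n j r : ℕ} (hr : r < 2^n) :
    r + 2^n ∈ Dbar (n+1) j ↔ r ∈ Dbar n (j % 2^n) := by
  have hp : (2:ℕ)^(n+1) = 2^n*2 := by rw [pow_succ]
  rw [mem_Dbar, mem_Dbar]
  constructor
  · rintro ⟨hm, h⟩
    refine ⟨hr, fun t ht hjt => ?_⟩
    rw [Nat.testBit_mod_two_pow, decide_eq_true ht, Bool.true_and] at hjt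
    have := h t (by omega) hjt
    rwa [testBit_add_high ht] at this
  · rintro ⟨hr', h⟩
    refine ⟨by omega, fun t ht hjt => ?_⟩
    rcases Nat.lt_or_ge t n with htn | htn
    · rw [testBit_add_high htn]
      exact h t htn (by rw [Nat.testBit_mod_two_pow, decide_eq_true htn, Bool.true_and]; exact hjt)
    · have : t = n := by omega
      subst this
      exact testBit_add_self hr

lemma Slow_Dbar {n j : ℕ} : Slow n (Dbar (n+1) j) = Dbar n (j % 2^n) := by
  ext r
  simp only [Slow, Finset.mem_filter, Finset.mem_range]
  constructor
  · rintro ⟨hr, h | h⟩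
    · exact ((Dbar_low hr).1 h).2
    · exact (Dbar_high hr).1 h
  · intro h
    have hr : r < 2^n := (mem_Dbar.1 h).1
    exact ⟨hr, Or.inr ((Dbar_high hr).2 h)⟩

lemma Shigh_Dbar_true {n j : ℕ} (hb : j.testBit n = true) :
    Shigh n (Dbar (n+1) j) = Dbar n (j % 2^n) := by
  ext r
  simp only [Shigh, Finset.mem_filter, Finset.mem_range]
  constructor
  · rintro ⟨hr, -, h⟩
    exact (Dbar_high hr).1 h
  · intro h
    have hr : r < 2^n := (mem_Dbar.1 h).1
    exact ⟨hr, (Dbar_low hr).2 ⟨hb, h⟩, (Dbar_high hr).2 h⟩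

lemma Shigh_erase_low {n j m : ℕ} (hb : j.testBit n = true) (hm : m < 2^n) :
    Shigh n ((Dbar (n+1) j).erase m) = (Dbar n (j % 2^n)).erase m := by
  ext r
  simp only [Shigh, Finset.mem_filter, Finset.mem_range, Finset.mem_erase]
  constructor
  · rintro ⟨hr, ⟨hne, h1⟩, -, h2⟩
    exact ⟨hne, (Dbar_high hr).1 h2⟩
  · rintro ⟨hne, h⟩
    have hr : r < 2^n := (mem_Dbar.1 h).1
    refine ⟨hr, ⟨hne, (Dbar_low hr).2 ⟨hb, h⟩⟩, ?_, (Dbar_high hr).2 h⟩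
    omega

lemma Shigh_erase_high {n j m : ℕ} (hb : j.testBit n = true) (hm : 2^n ≤ m) :
    Shigh n ((Dbar (n+1) j).erase m) = (Dbar n (j % 2^n)).erase (m - 2^n) := by
  ext r
  simp only [Shigh, Finset.mem_filter, Finset.mem_range, Finset.mem_erase]
  constructor
  · rintro ⟨hr, ⟨-, h1⟩, hne, h2⟩
    exact ⟨by omega, (Dbar_high hr).1 h2⟩
  · rintro ⟨hne, h⟩
    have hr : r < 2^n := (mem_Dbar.1 h).1
    refine ⟨hr, ⟨by omega, (Dbar_low hr).2 ⟨hb, h⟩⟩, by omega, (Dbar_high hr).2 h⟩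

lemma Slow_erase_high {n j m : ℕ} (hb : j.testBit n = false) (hm : 2^n ≤ m) :
    Slow n ((Dbar (n+1) j).erase m) = (Dbar n (j % 2^n)).erase (m - 2^n) := by
  ext r
  simp only [Slow, Finset.mem_filter, Finset.mem_range, Finset.mem_erase]
  constructor
  · rintro ⟨hr, ⟨-, h1⟩ | ⟨hne, h2⟩⟩
    · exact absurd (((Dbar_low hr).1 h1).1) (by rw [hb]; simp)
    · exact ⟨by omega, (Dbar_high hr).1 h2⟩
  · rintro ⟨hne, h⟩
    have hr : r < 2^n := (mem_Dbar.1 h).1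
    exact ⟨hr, Or.inr ⟨by omega, (Dbar_high hr).2 h⟩⟩

lemma high_decomp {n j : ℕ} (hj : j < 2^(n+1)) (hb : j.testBit n = true) :
    j % 2^n + 2^n = j := by
  have hp : (2:ℕ)^(n+1) = 2^n*2 := by rw [pow_succ]
  have hge : 2^n ≤ j := Nat.ge_two_pow_of_testBit hb
  have h1 := Nat.mod_add_div j (2^n)
  have h2 : j / 2^n = 1 := by
    rw [Nat.div_eq_sub_div (Nat.two_pow_pos n) hge, Nat.div_eq_of_lt (by omega)]
  rw [h2, Nat.mul_one] at h1
  omega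

lemma lemA : ∀ n j, j < 2^n → j ∈ Up n (Dbar n j)
  | 0, j, hj => by
    have : j = 0 := by norm_num at hj; omega
    subst this
    rw [Up, Zstage_stop (le_refl 0), mem_Dbar]
    exact ⟨by norm_num, fun t ht => by omega⟩
  | n+1, j, hj => by
    cases hb : j.testBit n with
    | false =>
      have hjn : j < 2^n := lt_pow_of_testBit_false hj hb
      have hmod : j % 2^n = j := Nat.mod_eq_of_lt hjn
      rw [Up_low hjn, Slow_Dbar, hmod]
      exact lemA n j hjn
    | true =>
      have hlt : j % 2^n < 2^n := Nat.mod_lt _ (Nat.two_pow_pos n)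
      have key : j % 2^n + 2^n ∈ Up (n+1) (Dbar (n+1) j) := by
        rw [Up_high hlt, Shigh_Dbar_true hb]
        exact lemA n (j % 2^n) hlt
      rwa [high_decomp hj hb] at key

lemma lemB : ∀ n j m, j < 2^n → m ∈ Dbar n j → j ∉ Up n ((Dbar n j).erase m)
  | 0, j, m, hj, hm => by
    have hj0 : j = 0 := by norm_num at hj; omega
    have hm0 : m = 0 := by
      have := (mem_Dbar.1 hm).1; norm_num at this; omega
    subst hj0; subst hm0
    rw [Up, Zstage_stop (le_refl 0)]
    simp
  | n+1, j, m, hj, hm => by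
    have hm2 : m < 2^(n+1) := (mem_Dbar.1 hm).1
    cases hb : j.testBit n with
    | false =>
      have hjn : j < 2^n := lt_pow_of_testBit_false hj hb
      have hmod : j % 2^n = j := Nat.mod_eq_of_lt hjn
      have hmb : 2^n ≤ m := by
        by_contra h
        push_neg at h
        have := ((Dbar_low h).1 hm).1
        rw [hb] at this; exact absurd this (by simp)
      have hr0 : m - 2^n ∈ Dbar n (j % 2^n) := by
        have he : m - 2^n + 2^n = m := by omega
        exact (Dbar_high (by omega)).1 (by rw [he]; exact hm)
      rw [hmod] at hr0
      intro hmem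
      rw [Up_low hjn, Slow_erase_high hb hmb, hmod] at hmem
      exact lemB n j (m - 2^n) hjn hr0 hmem
    | true =>
      have hlt : j % 2^n < 2^n := Nat.mod_lt _ (Nat.two_pow_pos n)
      intro hmem
      have hmem' : j % 2^n + 2^n ∈ Up (n+1) ((Dbar (n+1) j).erase m) := by
        rw [high_decomp hj hb]; exact hmem
      rcases Nat.lt_or_ge m (2^n) with hmb | hmb
      · have hr0 : m ∈ Dbar n (j % 2^n) := ((Dbar_low hmb).1 hm).2
        rw [Up_high hlt, Shigh_erase_low hb hmb] at hmem'
        exact lemB n (j % 2^n) m hlt hr0 hmem'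
      · have hr0 : m - 2^n ∈ Dbar n (j % 2^n) := by
          have he : m - 2^n + 2^n = m := by omega
          exact (Dbar_high (by omega)).1 (by rw [he]; exact hm)
        rw [Up_high hlt, Shigh_erase_high hb hmb] at hmem'
        exact lemB n (j % 2^n) (m - 2^n) hlt hr0 hmem'


/-- the bitwise complement `D̄_j = {(2^n−1)−k : k ⪯ j, k < 2^n}` of the
dominated set is a minimal puncturing bit pattern making bit `j` incapable. -/
theorem complement_dominated_set_minimal_pattern (n : ℕ) (hn : 1 ≤ n)
    (j : ℕ) (hj : j < 2 ^ n) :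
    j ∈ Up n (((Finset.range (2 ^ n)).filter fun k => bdom k j).image
        fun k => 2 ^ n - 1 - k) ∧
      ∀ Q ⊂ ((Finset.range (2 ^ n)).filter fun k => bdom k j).image
          (fun k => 2 ^ n - 1 - k), j ∉ Up n Q := by
  constructor
  · exact lemA n j hj
  · intro Q hQ hmem
    obtain ⟨m, hmD, hmQ⟩ := Finset.exists_of_ssubset hQ
    have hsub : Q ⊆ (Dbar n j).erase m := Finset.subset_erase.2 ⟨hQ.subset, hmQ⟩
    exact lemB n j m hj hmD (Zstage_mono hsub 0 hmem)
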